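/- arXiv:1005.4225 — 2 statements merged into one kernel-verified Lean document; each statement's English description precedes it below -/
import Mathlib

section
/- Let Δ in E and Δ̃ in Ẽ be two finite reduced crystallographic root systems with Weyl groups W, W̃, positive systems Δ⁺, Δ̃⁺, half-sums of positive roots ρ, ρ̃, weight lattices P, P̃ and dominant monoids P⁺, P̃⁺. Let f : Ẽ → E be a linear map with f(P̃) ⊆ P, and let w ∈ W and w̃ ∈ W̃ satisfy f(⟨Φ_{w̃}⟩) = ⟨Φ_w⟩, where Φ denotes inversion sets and ⟨Φ⟩ the sum of the elements of Φ. Then the set D_{w,w̃} = {(μ, μ̃) ∈ P⁺ × P̃⁺ : μ = w·(f(w̃⁻¹·μ̃))} (dot denoting the respective affine actions) is a finitely generated submonoid of the additive monoid P⁺ × P̃⁺. -/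
open scoped InnerProductSpace Classical

/-- A finite reduced crystallographic root system, together with a fixed positive system
(cut out by a linear functional not vanishing on any root), in a real inner product space. -/
structure RootSystemData (E : Type*) [NormedAddCommGroup E] [InnerProductSpace ℝ E] where
  roots : Finset E
  zero_not_mem : (0 : E) ∉ roots
  span_top : Submodule.span ℝ (roots : Set E) = ⊤
  reduced : ∀ α ∈ roots, ∀ t : ℝ, t • α ∈ roots → t = 1 ∨ t = -1
  crystallographic : ∀ α ∈ roots, ∀ β ∈ roots, ∃ n : ℤ, 2 * ⟪β, α⟫_ℝ / ⟪α, α⟫_ℝ = (n : ℝ)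
  reflect_mem : ∀ α ∈ roots, ∀ β ∈ roots, β - (2 * ⟪β, α⟫_ℝ / ⟪α, α⟫_ℝ) • α ∈ roots
  posFun : E →ₗ[ℝ] ℝ
  posFun_ne_zero : ∀ α ∈ roots, posFun α ≠ 0

namespace RootSystemData

variable {E : Type*} [NormedAddCommGroup E] [InnerProductSpace ℝ E] [FiniteDimensional ℝ E]

/-- The orthogonal reflection along the root `α` (reflection through the hyperplane `α^⊥`). -/
noncomputable def reflect (α : E) : E ≃ₗᵢ[ℝ] E := Submodule.reflection (ℝ ∙ α)ᗮ

variable (R : RootSystemData E)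

/-- The Weyl group: the group of isometries generated by the reflections along the roots. -/
noncomputable def weyl : Subgroup (E ≃ₗᵢ[ℝ] E) :=
  Subgroup.closure { s | ∃ α ∈ R.roots, s = reflect α }

/-- The positive roots `Δ⁺`. -/
noncomputable def pos : Finset E := R.roots.filter fun α => 0 < R.posFun α

/-- `ρ`, the half-sum of the positive roots. -/
noncomputable def rho : E := (2 : ℝ)⁻¹ • ∑ α ∈ R.pos, α

/-- The inversion set `Φ_w = Δ⁺ ∩ w⁻¹(Δ⁻)`. -/
noncomputable def inv (w : E ≃ₗᵢ[ℝ] E) : Finset E :=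
  R.pos.filter fun α => -(w α) ∈ R.pos

/-- `⟨Φ_w⟩`, the sum of the elements of the inversion set of `w`. -/
noncomputable def invSum (w : E ≃ₗᵢ[ℝ] E) : E := ∑ α ∈ R.inv w, α

/-- The length of `w`, i.e. the cardinality of its inversion set. -/
noncomputable def len (w : E ≃ₗᵢ[ℝ] E) : ℕ := (R.inv w).card

/-- The affine (dot) action `w · λ = w(λ + ρ) - ρ`. -/
noncomputable def dot (w : E ≃ₗᵢ[ℝ] E) (l : E) : E := w (l + R.rho) - R.rho

/-- Membership in the weight lattice `𝒫`. -/
def IsWeight (l : E) : Prop :=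
  ∀ α ∈ R.roots, ∃ n : ℤ, 2 * ⟪l, α⟫_ℝ / ⟪α, α⟫_ℝ = (n : ℝ)

/-- Membership in the dominant monoid `𝒫⁺`. -/
def IsDominant (l : E) : Prop :=
  R.IsWeight l ∧ ∀ α ∈ R.pos, 0 ≤ ⟪l, α⟫_ℝ

/-- The simple roots: the indecomposable positive roots. -/
noncomputable def simples : Finset E :=
  R.pos.filter fun α => ¬ ∃ β ∈ R.pos, ∃ γ ∈ R.pos, α = β + γ

end RootSystemData

-- Auxiliary development


lemma gordan_core {ι : Type*} [Fintype ι] (S : Set (ι → ℕ)) (h0 : 0 ∈ S)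
    (hadd : ∀ a ∈ S, ∀ b ∈ S, a + b ∈ S)
    (hsub : ∀ a ∈ S, ∀ b ∈ S, a ≤ b → b - a ∈ S) :
    ∃ T : Finset (ι → ℕ), ↑T ⊆ S ∧ (AddSubmonoid.closure (T : Set (ι → ℕ)) : Set (ι → ℕ)) = S := by
  classical
  set A : Set (ι → ℕ) := {u | u ∈ S ∧ u ≠ 0 ∧ ∀ v ∈ S, v ≠ 0 → v ≤ u → v = u} with hA
  have hanti : IsAntichain (· ≤ ·) A := by
    intro u hu v hv hne hle
    exact hne (hv.2.2 u hu.1 hu.2.1 hle)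
  have hAfin : A.Finite :=
    hanti.finite_of_partiallyWellOrderedOn
      ((Set.IsPWO.pi (fun _ => Set.isPWO_of_wellQuasiOrderedLE (Set.univ : Set ℕ))).mono
        (fun x _ => Set.mem_univ_pi.2 fun _ => trivial))
  refine ⟨hAfin.toFinset, ?_, ?_⟩
  · intro u hu
    rw [Finset.mem_coe, Set.Finite.mem_toFinset] at hu; exact hu.1
  · apply subset_antisymm
    · have : AddSubmonoid.closure (hAfin.toFinset : Set (ι → ℕ)) ≤
          { carrier := S, add_mem' := fun {a b} ha hb => hadd a ha b hb, zero_mem' := h0 } := by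
        apply AddSubmonoid.closure_le.2
        intro u hu
        rw [Finset.mem_coe, Set.Finite.mem_toFinset] at hu; exact hu.1
      exact this
    · intro u hu
      have key : ∀ n : ℕ, ∀ u ∈ S, (∑ i, u i) = n →
          u ∈ AddSubmonoid.closure (hAfin.toFinset : Set (ι → ℕ)) := by
        intro n
        induction n using Nat.strong_induction_on with
        | _ n ih =>
          intro u hu hn
          by_cases hu0 : u = 0
          · subst hu0; exact AddSubmonoid.zero_mem _
          · set B : Finset (ι → ℕ) := (Finset.Iic u).filter (fun v => v ∈ S ∧ v ≠ 0) with hB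
            have hBne : B.Nonempty :=
              ⟨u, by simp [hB, Finset.mem_filter, Finset.mem_Iic, hu, hu0]⟩
            obtain ⟨v, hvB, hvmin⟩ := B.exists_min_image (fun v => ∑ i, v i) hBne
            rw [hB, Finset.mem_filter, Finset.mem_Iic] at hvB
            obtain ⟨hvu, hvS, hv0⟩ := hvB
            -- v is a minimal nonzero element of S
            have hvA : v ∈ A := by
              refine ⟨hvS, hv0, fun v' hv'S hv'0 hv'le => ?_⟩
              have hv'B : v' ∈ B := by
                rw [hB, Finset.mem_filter, Finset.mem_Iic]
                exact ⟨le_trans hv'le hvu, hv'S, hv'0⟩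
              have h1 : (∑ i, v i) ≤ ∑ i, v' i := hvmin v' hv'B
              have h2 : ∀ i, v' i ≤ v i := hv'le
              have : ∀ i, v' i = v i := by
                by_contra hcon
                push_neg at hcon
                obtain ⟨j, hj⟩ := hcon
                have hjlt : v' j < v j := lt_of_le_of_ne (h2 j) hj
                have : (∑ i, v' i) < ∑ i, v i :=
                  Finset.sum_lt_sum (fun i _ => h2 i) ⟨j, Finset.mem_univ j, hjlt⟩
                omega
              exact funext this
            have hsum_pos : 0 < ∑ i, v i := by
              rcases Function.ne_iff.1 hv0 with ⟨j, hj⟩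
              exact Finset.sum_pos' (fun i _ => Nat.zero_le _)
                ⟨j, Finset.mem_univ j, Nat.pos_of_ne_zero hj⟩
            have huv : u - v ∈ S := hsub v hvS u hu hvu
            have hle : ∀ i, v i ≤ u i := hvu
            have hsplit : (∑ i, (u - v) i) + (∑ i, v i) = ∑ i, u i := by
              rw [← Finset.sum_add_distrib]
              apply Finset.sum_congr rfl
              intro i _
              have := hle i
              simp only [Pi.sub_apply, Pi.add_apply]
              omega
            have hsum_lt : (∑ i, (u - v) i) < n := by omega
            have hrec := ih _ hsum_lt (u - v) huv rfl
            have : u = (u - v) + v := by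
              funext i
              have : v i ≤ u i := hvu i
              simp [Pi.add_apply, Pi.sub_apply]
              omega
            rw [this]
            exact AddSubmonoid.add_mem _ hrec
              (AddSubmonoid.subset_closure (by rw [Finset.mem_coe, Set.Finite.mem_toFinset]; exact hvA))
      exact key _ u hu rfl

set_option linter.unusedSectionVars false
set_option maxHeartbeats 1000000

namespace RootSystemData

variable {E : Type*} [NormedAddCommGroup E] [InnerProductSpace ℝ E] [FiniteDimensional ℝ E]
variable (R : RootSystemData E)

lemma reflect_apply (α β : E) :
    reflect α β = β - (2 * ⟪β, α⟫_ℝ / ⟪α, α⟫_ℝ) • α := by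
  rw [RootSystemData.reflect, Submodule.reflection_apply, Submodule.starProjection_orthogonal_val,
    Submodule.starProjection_singleton]
  simp only [RCLike.ofReal_real_eq_id, id_eq]
  rw [real_inner_self_eq_norm_sq, real_inner_comm β α, two_smul]
  module

lemma root_ne_zero {α : E} (hα : α ∈ R.roots) : α ≠ 0 :=
  fun h => R.zero_not_mem (h ▸ hα)

lemma inner_self_pos_of_root {α : E} (hα : α ∈ R.roots) : 0 < ⟪α, α⟫_ℝ := by
  rw [real_inner_self_eq_norm_sq]
  have : α ≠ 0 := R.root_ne_zero hα
  exact pow_pos (norm_pos_iff.2 this) 2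

lemma neg_mem_roots {α : E} (hα : α ∈ R.roots) : -α ∈ R.roots := by
  have h := R.reflect_mem α hα α hα
  have hne : ⟪α, α⟫_ℝ ≠ 0 := ne_of_gt (R.inner_self_pos_of_root hα)
  rw [mul_div_assoc, div_self hne, mul_one, two_smul] at h
  have : α - (α + α) = -α := by abel
  rwa [this] at h

/-- Every element of the Weyl group permutes the set of roots. -/
lemma weyl_maps_roots {w : E ≃ₗᵢ[ℝ] E} (hw : w ∈ R.weyl) :
    ∀ α ∈ R.roots, w α ∈ R.roots := by
  have key : ∀ w ∈ R.weyl, (∀ α ∈ R.roots, w α ∈ R.roots) := by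
    intro w hw
    induction hw using Subgroup.closure_induction with
    | mem s hs =>
      obtain ⟨α, hα, rfl⟩ := hs
      intro β hβ
      rw [reflect_apply α β]
      exact R.reflect_mem α hα β hβ
    | one => intro α hα; exact hα
    | mul x y hx hy ihx ihy =>
      intro α hα
      have : (x * y) α = x (y α) := rfl
      rw [this]; exact ihx _ (ihy _ hα)
    | inv x hx ihx =>
      intro α hα
      have himg : R.roots.image x = R.roots := by
        apply Finset.eq_of_subset_of_card_le
        · intro β hβ
          obtain ⟨γ, hγ, rfl⟩ := Finset.mem_image.1 hβ
          exact ihx _ hγ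
        · rw [Finset.card_image_of_injective _ x.injective]
      obtain ⟨γ, hγ, hγα⟩ := Finset.mem_image.1 (himg ▸ hα)
      have : x⁻¹ α = γ := by
        have : x⁻¹ (x γ) = γ := by
          show x.symm (x γ) = γ
          exact x.symm_apply_apply γ
        rw [← hγα]; exact this
      rw [this]; exact hγ
  exact key w hw

lemma weyl_inv_maps_roots {w : E ≃ₗᵢ[ℝ] E} (hw : w ∈ R.weyl) :
    ∀ α ∈ R.roots, w.symm α ∈ R.roots := by
  have := R.weyl_maps_roots (inv_mem hw)
  simpa using this

lemma mem_pos {α : E} : α ∈ R.pos ↔ α ∈ R.roots ∧ 0 < R.posFun α := Finset.mem_filter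

lemma pos_subset_roots : R.pos ⊆ R.roots := Finset.filter_subset _ _

lemma neg_mem_pos_of_not_pos {α : E} (hα : α ∈ R.roots) (h : α ∉ R.pos) : -α ∈ R.pos := by
  rw [R.mem_pos] at h ⊢
  refine ⟨R.neg_mem_roots hα, ?_⟩
  have h1 : R.posFun α ≠ 0 := R.posFun_ne_zero α hα
  have h2 : ¬ (0 < R.posFun α) := fun hh => h ⟨hα, hh⟩
  rw [map_neg]
  cases lt_or_gt_of_ne h1 with
  | inl hlt => linarith
  | inr hgt => exact absurd hgt h2

lemma neg_not_pos {α : E} (h : α ∈ R.pos) : -α ∉ R.pos := by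
  rw [R.mem_pos] at h ⊢
  rintro ⟨-, hneg⟩
  rw [map_neg] at hneg
  linarith [h.2]

lemma root_pos_iff {β : E} (hβ : β ∈ R.roots) : β ∈ R.pos ↔ ¬ (-β ∈ R.pos) := by
  constructor
  · exact fun h => R.neg_not_pos h
  · intro h
    by_contra hβp
    exact h (R.neg_mem_pos_of_not_pos hβ hβp)

lemma inv_subset_pos (w : E ≃ₗᵢ[ℝ] E) : R.inv w ⊆ R.pos := Finset.filter_subset _ _

/-- The key identity `w⁻¹ ρ = ρ - ⟨Φ_w⟩`. -/
lemma symm_rho {w : E ≃ₗᵢ[ℝ] E} (hw : w ∈ R.weyl) :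
    w.symm R.rho = R.rho - R.invSum w := by
  classical
  have hroots := R.weyl_maps_roots hw
  have hroots' := R.weyl_inv_maps_roots hw
  set B : Finset E := R.roots.filter (fun β => w β ∈ R.pos) with hB
  have himg : R.pos.image w.symm = B := by
    ext β
    rw [hB, Finset.mem_image, Finset.mem_filter]
    constructor
    · rintro ⟨α, hα, rfl⟩
      refine ⟨hroots' _ (R.pos_subset_roots hα), ?_⟩
      rw [w.apply_symm_apply]; exact hα
    · rintro ⟨hβr, hwβ⟩
      exact ⟨w β, hwβ, w.symm_apply_apply β⟩
  have hsum1 : ∑ α ∈ R.pos, w.symm α = ∑ β ∈ B, β := by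
    rw [← himg, Finset.sum_image (fun x _ y _ h => w.symm.injective h)]
  have h1 : B.filter (fun β => β ∈ R.pos) = R.pos \ R.inv w := by
    ext β
    rw [Finset.mem_filter, Finset.mem_sdiff, hB, Finset.mem_filter, RootSystemData.inv,
      Finset.mem_filter]
    constructor
    · rintro ⟨⟨hβr, hwβ⟩, hβp⟩
      refine ⟨hβp, ?_⟩
      rintro ⟨-, hneg⟩
      exact (R.root_pos_iff (hroots _ hβr)).1 hwβ hneg
    · rintro ⟨hβp, hni⟩
      have hβr := R.pos_subset_roots hβp
      refine ⟨⟨hβr, ?_⟩, hβp⟩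
      rw [R.root_pos_iff (hroots _ hβr)]
      exact fun hneg => hni ⟨hβp, hneg⟩
  have h2 : B.filter (fun β => β ∉ R.pos) = (R.inv w).image (fun α => -α) := by
    ext β
    rw [Finset.mem_filter, hB, Finset.mem_filter, Finset.mem_image]
    constructor
    · rintro ⟨⟨hβr, hwβ⟩, hβp⟩
      refine ⟨-β, ?_, neg_neg β⟩
      rw [RootSystemData.inv, Finset.mem_filter]
      refine ⟨R.neg_mem_pos_of_not_pos hβr hβp, ?_⟩
      rw [map_neg, neg_neg]
      exact hwβ
    · rintro ⟨α, hα, rfl⟩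
      rw [RootSystemData.inv, Finset.mem_filter] at hα
      obtain ⟨hαp, hαneg⟩ := hα
      have hαr := R.pos_subset_roots hαp
      refine ⟨⟨R.neg_mem_roots hαr, ?_⟩, R.neg_not_pos hαp⟩
      · rw [map_neg]; exact hαneg
  have h3 : ∑ β ∈ (R.inv w).image (fun α => -α), β = - R.invSum w := by
    rw [Finset.sum_image (fun x _ y _ h => neg_injective h), RootSystemData.invSum,
      ← Finset.sum_neg_distrib]
  have h4 : ∑ β ∈ R.pos \ R.inv w, β = (∑ β ∈ R.pos, β) - R.invSum w :=
    Finset.sum_sdiff_eq_sub (R.inv_subset_pos w)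
  have hsplit := Finset.sum_filter_add_sum_filter_not B (fun β => β ∈ R.pos) (fun β => β)
  rw [h1, h2, h3, h4] at hsplit
  have hfinal : w.symm (∑ α ∈ R.pos, α) = (∑ α ∈ R.pos, α) - (2:ℝ) • R.invSum w := by
    rw [map_sum, hsum1, ← hsplit]
    rw [two_smul]
    abel
  rw [RootSystemData.rho, map_smul, hfinal, smul_sub, smul_smul]
  norm_num

lemma isWeight_zero : R.IsWeight 0 := by
  intro α hα
  exact ⟨0, by simp⟩

lemma isWeight_add {l l' : E} (h : R.IsWeight l) (h' : R.IsWeight l') :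
    R.IsWeight (l + l') := by
  intro α hα
  obtain ⟨n, hn⟩ := h α hα
  obtain ⟨m, hm⟩ := h' α hα
  refine ⟨n + m, ?_⟩
  rw [inner_add_left]
  push_cast
  rw [← hn, ← hm]
  ring

lemma isWeight_sub {l l' : E} (h : R.IsWeight l) (h' : R.IsWeight l') :
    R.IsWeight (l - l') := by
  intro α hα
  obtain ⟨n, hn⟩ := h α hα
  obtain ⟨m, hm⟩ := h' α hα
  refine ⟨n - m, ?_⟩
  rw [inner_sub_left]
  push_cast
  rw [← hn, ← hm]
  ring

lemma weyl_isWeight {w : E ≃ₗᵢ[ℝ] E} (hw : w ∈ R.weyl) {l : E} (h : R.IsWeight l) :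
    R.IsWeight (w l) := by
  intro α hα
  have hβ : w.symm α ∈ R.roots := R.weyl_inv_maps_roots hw α hα
  obtain ⟨n, hn⟩ := h _ hβ
  refine ⟨n, ?_⟩
  have e1 : ⟪w l, α⟫_ℝ = ⟪l, w.symm α⟫_ℝ := by
    conv_lhs => rw [← w.apply_symm_apply α]
    exact w.inner_map_map l (w.symm α)
  have e2 : ⟪α, α⟫_ℝ = ⟪w.symm α, w.symm α⟫_ℝ := (w.symm.inner_map_map α α).symm
  rw [e1, e2]
  exact hn

lemma isDominant_zero : R.IsDominant 0 :=
  ⟨R.isWeight_zero, fun α _ => by simp⟩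

lemma isDominant_add {l l' : E} (h : R.IsDominant l) (h' : R.IsDominant l') :
    R.IsDominant (l + l') :=
  ⟨R.isWeight_add h.1 h'.1, fun α hα => by
    rw [inner_add_left]
    exact add_nonneg (h.2 α hα) (h'.2 α hα)⟩

end RootSystemData

section Main

open RootSystemData

variable {E : Type*} [NormedAddCommGroup E] [InnerProductSpace ℝ E] [FiniteDimensional ℝ E]
variable {F : Type*} [NormedAddCommGroup F] [InnerProductSpace ℝ F] [FiniteDimensional ℝ F]

/-- Index type: positive roots of `Rt` plus positive roots of `R`. -/
abbrev PosIdx (R : RootSystemData E) (Rt : RootSystemData F) : Type _ :=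
  {a : F // a ∈ Rt.pos} ⊕ {b : E // b ∈ R.pos}

lemma inner_eq_zero_of_forall_pos (Rt : RootSystemData F) {v : F}
    (h : ∀ a ∈ Rt.pos, ⟪v, a⟫_ℝ = 0) : v = 0 := by
  have hall : ∀ a ∈ Rt.roots, ⟪a, v⟫_ℝ = 0 := by
    intro a ha
    by_cases hp : a ∈ Rt.pos
    · rw [real_inner_comm]; exact h a hp
    · have hneg := Rt.neg_mem_pos_of_not_pos ha hp
      have := h _ hneg
      rw [inner_neg_right] at this
      rw [real_inner_comm]
      linarith
  have hmem : v ∈ (Submodule.span ℝ (Rt.roots : Set F))ᗮ := by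
    rw [Submodule.mem_orthogonal]
    intro u hu
    induction hu using Submodule.span_induction with
    | mem u hu => exact hall u hu
    | zero => simp
    | add u₁ u₂ _ _ ih1 ih2 => rw [inner_add_left, ih1, ih2]; ring
    | smul r u _ ih => rw [inner_smul_left, ih]; ring
  rw [Rt.span_top, Submodule.top_orthogonal_eq_bot, Submodule.mem_bot] at hmem
  exact hmem

lemma dominant_pair_fg (R : RootSystemData E) (Rt : RootSystemData F) (g : F →ₗ[ℝ] E)
    (hgw : ∀ x : F, Rt.IsWeight x → R.IsWeight (g x)) :
    ∃ TM : Finset F,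
      (↑TM ⊆ {x : F | Rt.IsDominant x ∧ R.IsDominant (g x)}) ∧
      (AddSubmonoid.closure (TM : Set F) : Set F) =
        {x : F | Rt.IsDominant x ∧ R.IsDominant (g x)} := by
  classical
  set M : Set F := {x : F | Rt.IsDominant x ∧ R.IsDominant (g x)} with hMdef
  have hM0 : (0 : F) ∈ M := ⟨Rt.isDominant_zero, by rw [map_zero]; exact R.isDominant_zero⟩
  have hMadd : ∀ a ∈ M, ∀ b ∈ M, a + b ∈ M := by
    intro a ha b hb
    refine ⟨Rt.isDominant_add ha.1 hb.1, ?_⟩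
    rw [map_add]
    exact R.isDominant_add ha.2 hb.2
  -- the coordinate map
  set c : F → PosIdx R Rt → ℝ := fun x i =>
    match i with
    | Sum.inl a => 2 * ⟪x, a.1⟫_ℝ / ⟪a.1, a.1⟫_ℝ
    | Sum.inr b => 2 * ⟪g x, b.1⟫_ℝ / ⟪b.1, b.1⟫_ℝ
    with hcdef
  have hcl : ∀ x (a : {a : F // a ∈ Rt.pos}), c x (Sum.inl a) = 2 * ⟪x, a.1⟫_ℝ / ⟪a.1, a.1⟫_ℝ :=
    fun _ _ => rfl
  have hcr : ∀ x (b : {b : E // b ∈ R.pos}), c x (Sum.inr b) = 2 * ⟪g x, b.1⟫_ℝ / ⟪b.1, b.1⟫_ℝ :=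
    fun _ _ => rfl
  have hcadd : ∀ x y, c (x + y) = c x + c y := by
    intro x y
    funext i
    rcases i with a | b
    · simp only [hcl, inner_add_left, Pi.add_apply]; ring
    · simp only [hcr, map_add, inner_add_left, Pi.add_apply]; ring
  have hc0 : c 0 = 0 := by
    funext i
    rcases i with a | b
    · simp only [hcl, inner_zero_left, Pi.zero_apply]; ring
    · simp only [hcr, map_zero, inner_zero_left, Pi.zero_apply]; ring
  have hcsub : ∀ x y, c (x - y) = c x - c y := by
    intro x y
    funext i
    rcases i with a | b
    · simp only [hcl, inner_sub_left, Pi.sub_apply]; ring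
    · simp only [hcr, map_sub, inner_sub_left, Pi.sub_apply]; ring
  -- injectivity
  have hcinj : ∀ x y : F, c x = c y → x = y := by
    intro x y hxy
    have hsub : c (x - y) = 0 := by rw [hcsub, hxy, sub_self]
    have hv : ∀ a ∈ Rt.pos, ⟪x - y, a⟫_ℝ = 0 := by
      intro a ha
      have := congrFun hsub (Sum.inl ⟨a, ha⟩)
      rw [hcl] at this
      have hpos : (0:ℝ) < ⟪a, a⟫_ℝ := Rt.inner_self_pos_of_root (Rt.pos_subset_roots ha)
      have := div_eq_zero_iff.1 this
      rcases this with h | h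
      · linarith
      · linarith
    have := inner_eq_zero_of_forall_pos Rt hv
    exact sub_eq_zero.1 this
  -- sign extraction helper
  have hsign : ∀ (a cc : ℝ), 0 < cc → 0 ≤ 2 * a / cc → 0 ≤ a := by
    intro a cc hcc h
    have h2 : 0 ≤ (2 * a / cc) * cc := mul_nonneg h (le_of_lt hcc)
    rw [div_mul_cancel₀ _ (ne_of_gt hcc)] at h2
    linarith
  -- values on M are nonnegative integers
  have hval : ∀ x ∈ M, ∀ i : PosIdx R Rt, ∃ n : ℕ, (n : ℝ) = c x i := by
    rintro x ⟨hx1, hx2⟩ i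
    rcases i with a | b
    · obtain ⟨n, hn⟩ := hx1.1 a.1 (Rt.pos_subset_roots a.2)
      have hpos : (0:ℝ) < ⟪a.1, a.1⟫_ℝ := Rt.inner_self_pos_of_root (Rt.pos_subset_roots a.2)
      have hnn : (0:ℝ) ≤ (n:ℝ) := by
        rw [← hn]
        have := hx1.2 a.1 a.2
        positivity
      have hn0 : 0 ≤ n := by exact_mod_cast hnn
      refine ⟨n.toNat, ?_⟩
      rw [hcl, hn]
      exact_mod_cast Int.toNat_of_nonneg hn0
    · obtain ⟨n, hn⟩ := hx2.1 b.1 (R.pos_subset_roots b.2)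
      have hpos : (0:ℝ) < ⟪b.1, b.1⟫_ℝ := R.inner_self_pos_of_root (R.pos_subset_roots b.2)
      have hnn : (0:ℝ) ≤ (n:ℝ) := by
        rw [← hn]
        have := hx2.2 b.1 b.2
        positivity
      have hn0 : 0 ≤ n := by exact_mod_cast hnn
      refine ⟨n.toNat, ?_⟩
      rw [hcr, hn]
      exact_mod_cast Int.toNat_of_nonneg hn0
  -- the shadow monoid in ℕ^I
  set SN : Set (PosIdx R Rt → ℕ) := {u | ∃ x, x ∈ M ∧ ∀ i, (u i : ℝ) = c x i} with hSNdef
  have hSN0 : (0 : PosIdx R Rt → ℕ) ∈ SN := by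
    refine ⟨0, hM0, fun i => ?_⟩
    rw [hc0]
    simp
  have hSNadd : ∀ u ∈ SN, ∀ v ∈ SN, u + v ∈ SN := by
    rintro u ⟨x, hxM, hx⟩ v ⟨y, hyM, hy⟩
    refine ⟨x + y, hMadd x hxM y hyM, fun i => ?_⟩
    rw [hcadd]
    simp only [Pi.add_apply]
    push_cast
    rw [hx i, hy i]
  have hSNsub : ∀ u ∈ SN, ∀ v ∈ SN, u ≤ v → v - u ∈ SN := by
    rintro u ⟨x, hxM, hx⟩ v ⟨y, hyM, hy⟩ huv
    have hkey : ∀ i, c x i ≤ c y i := by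
      intro i
      rw [← hx i, ← hy i]
      exact_mod_cast huv i
    have hyxM : y - x ∈ M := by
      constructor
      · refine ⟨Rt.isWeight_sub hyM.1.1 hxM.1.1, ?_⟩
        intro a ha
        have h1 := hkey (Sum.inl ⟨a, ha⟩)
        rw [hcl, hcl] at h1
        have hpos : (0:ℝ) < ⟪a, a⟫_ℝ := Rt.inner_self_pos_of_root (Rt.pos_subset_roots ha)
        rw [inner_sub_left]
        apply hsign _ _ hpos
        rw [mul_sub, sub_div]
        linarith
      · rw [map_sub]
        refine ⟨R.isWeight_sub (hyM.2.1) (hxM.2.1), ?_⟩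
        intro b hb
        have h1 := hkey (Sum.inr ⟨b, hb⟩)
        rw [hcr, hcr] at h1
        have hpos : (0:ℝ) < ⟪b, b⟫_ℝ := R.inner_self_pos_of_root (R.pos_subset_roots hb)
        rw [inner_sub_left]
        apply hsign _ _ hpos
        rw [mul_sub, sub_div]
        linarith
    refine ⟨y - x, hyxM, fun i => ?_⟩
    rw [hcsub]
    simp only [Pi.sub_apply]
    rw [← hx i, ← hy i]
    have := huv i
    push_cast [Nat.cast_sub this]
    ring
  obtain ⟨T, hTsub, hTclos⟩ := gordan_core SN hSN0 hSNadd hSNsub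
  -- choose witnesses for elements of T
  have hchoice : ∀ u : {u // u ∈ T}, ∃ x, x ∈ M ∧ ∀ i, ((u : PosIdx R Rt → ℕ) i : ℝ) = c x i :=
    fun u => hTsub u.2
  choose xw hxwM hxwc using hchoice
  set TM : Finset F := T.attach.image xw with hTM
  have hTMsub : (TM : Set F) ⊆ M := by
    intro x hx
    rw [Finset.coe_image] at hx
    obtain ⟨u, -, rfl⟩ := hx
    exact hxwM u
  refine ⟨TM, hTMsub, ?_⟩
  apply subset_antisymm
  · have : AddSubmonoid.closure (TM : Set F) ≤
        { carrier := M, add_mem' := fun {a b} ha hb => hMadd a ha b hb, zero_mem' := hM0 } :=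
      AddSubmonoid.closure_le.2 hTMsub
    exact this
  · intro x hxM
    -- produce the ℕ-vector of x
    choose n hn using hval x hxM
    have hnSN : n ∈ SN := ⟨x, hxM, hn⟩
    rw [← hTclos] at hnSN
    -- closure induction
    have main : ∀ u (hu : u ∈ AddSubmonoid.closure (T : Set (PosIdx R Rt → ℕ))),
        u ∈ SN ∧ ∀ y, y ∈ M → (∀ i, (u i : ℝ) = c y i) →
          y ∈ AddSubmonoid.closure (TM : Set F) := by
      intro u hu
      induction hu using AddSubmonoid.closure_induction with
      | mem u hu =>
        refine ⟨hTsub hu, fun y hyM hyc => ?_⟩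
        have hxin : xw ⟨u, hu⟩ ∈ TM := by
          rw [hTM]
          exact Finset.mem_image.2 ⟨⟨u, hu⟩, Finset.mem_attach _ _, rfl⟩
        have : c y = c (xw ⟨u, hu⟩) := by
          funext i
          rw [← hyc i, hxwc ⟨u, hu⟩ i]
        rw [hcinj y (xw ⟨u, hu⟩) this]
        exact AddSubmonoid.subset_closure hxin
      | zero =>
        refine ⟨hSN0, fun y hyM hyc => ?_⟩
        have : c y = c 0 := by
          funext i
          rw [← hyc i, hc0]
          simp
        rw [hcinj y 0 this]
        exact AddSubmonoid.zero_mem _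
      | add a b ha hb iha ihb =>
        refine ⟨hSNadd a iha.1 b ihb.1, fun y hyM hyc => ?_⟩
        obtain ⟨ya, hyaM, hya⟩ := iha.1
        obtain ⟨yb, hybM, hyb⟩ := ihb.1
        have hyacl := iha.2 ya hyaM hya
        have hybcl := ihb.2 yb hybM hyb
        have : c y = c (ya + yb) := by
          funext i
          rw [← hyc i, hcadd]
          simp only [Pi.add_apply]
          push_cast
          rw [hya i, hyb i]
        rw [hcinj y (ya + yb) this]
        exact AddSubmonoid.add_mem _ hyacl hybcl
    exact (main _ hnSN).2 x hxM hn

end Main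


/-- Lemma 2.7: if `f` is a linear map sending the weight lattice of `Δ̃` into that of `Δ`,
and `w ∈ W`, `w̃ ∈ W̃` satisfy `f(⟨Φ_{w̃}⟩) = ⟨Φ_w⟩`, then the set
`D_{w,w̃} = {(μ, μ̃) ∈ 𝒫⁺ × 𝒫̃⁺ : μ = w·(f(w̃⁻¹·μ̃))}` is a finitely generated submonoid
of `𝒫⁺ × 𝒫̃⁺`. -/
theorem D_w_wt_finitely_generated_submonoid
    {E F : Type*} [NormedAddCommGroup E] [InnerProductSpace ℝ E] [FiniteDimensional ℝ E]
    [NormedAddCommGroup F] [InnerProductSpace ℝ F] [FiniteDimensional ℝ F]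
    (R : RootSystemData E) (Rt : RootSystemData F)
    (f : F →ₗ[ℝ] E) (hf : ∀ l : F, Rt.IsWeight l → R.IsWeight (f l))
    (w : E ≃ₗᵢ[ℝ] E) (hw : w ∈ R.weyl)
    (wt : F ≃ₗᵢ[ℝ] F) (hwt : wt ∈ Rt.weyl)
    (hsum : f (Rt.invSum wt) = R.invSum w) :
    ∃ S : Finset (E × F),
      (AddSubmonoid.closure (S : Set (E × F)) : Set (E × F)) =
        {p : E × F | R.IsDominant p.1 ∧ Rt.IsDominant p.2 ∧
          p.1 = R.dot w (f (Rt.dot wt⁻¹ p.2))} := by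
  classical
  -- the linear map `g = w ∘ f ∘ wt⁻¹`
  set g : F →ₗ[ℝ] E :=
    (w.toLinearEquiv.toLinearMap.comp f).comp wt.symm.toLinearEquiv.toLinearMap with hgdef
  have hgapp : ∀ x : F, g x = w (f (wt.symm x)) := fun x => rfl
  -- `g` maps weights to weights
  have hgw : ∀ x : F, Rt.IsWeight x → R.IsWeight (g x) := by
    intro x hx
    rw [hgapp]
    refine R.weyl_isWeight hw (hf _ ?_)
    have h1 : Rt.IsWeight ((wt⁻¹ : F ≃ₗᵢ[ℝ] F) x) := Rt.weyl_isWeight (inv_mem hwt) hx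
    rwa [LinearIsometryEquiv.coe_inv] at h1
  -- linearization of the affine condition
  have hdot : ∀ x : F, R.dot w (f (Rt.dot wt⁻¹ x)) = g x := by
    intro x
    have hcoe : ⇑(wt⁻¹ : F ≃ₗᵢ[ℝ] F) = ⇑wt.symm := LinearIsometryEquiv.coe_inv wt
    have h1 : Rt.dot wt⁻¹ x = wt.symm x - Rt.invSum wt := by
      rw [RootSystemData.dot, hcoe, map_add, Rt.symm_rho hwt]
      abel
    rw [h1, RootSystemData.dot, map_sub, hsum]
    have h2 : f (wt.symm x) - R.invSum w + R.rho = f (wt.symm x) + (R.rho - R.invSum w) := by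
      abel
    rw [h2, ← R.symm_rho hw, map_add, w.apply_symm_apply, hgapp]
    abel
  -- the dominant-pair monoid is finitely generated
  obtain ⟨TM, hTMsub, hTMclos⟩ := dominant_pair_fg R Rt g hgw
  -- transport along `x ↦ (g x, x)`
  set h : F →+ E × F := (g.toAddMonoidHom).prod (AddMonoidHom.id F) with hhdef
  have happ : ∀ x : F, h x = (g x, x) := fun x => rfl
  refine ⟨TM.image (fun x => (g x, x)), ?_⟩
  have himg : (↑(TM.image (fun x => (g x, x))) : Set (E × F)) = h '' ↑TM := by
    rw [Finset.coe_image]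
    rfl
  rw [himg, ← AddMonoidHom.map_mclosure]
  ext p
  simp only [SetLike.mem_coe, AddSubmonoid.mem_map, Set.mem_setOf_eq]
  constructor
  · rintro ⟨x, hxcl, rfl⟩
    have hxM : x ∈ {x : F | Rt.IsDominant x ∧ R.IsDominant (g x)} := by
      rw [← hTMclos]; exact hxcl
    refine ⟨hxM.2, hxM.1, ?_⟩
    rw [hdot]
    rfl
  · rintro ⟨h1, h2, h3⟩
    refine ⟨p.2, ?_, ?_⟩
    · have : p.2 ∈ {x : F | Rt.IsDominant x ∧ R.IsDominant (g x)} := by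
        refine ⟨h2, ?_⟩
        rw [hdot] at h3
        rw [← h3]
        exact h1
      rw [← hTMclos] at this
      exact this
    · rw [happ]
      rw [hdot] at h3
      exact Prod.ext h3.symm rfl
end

section
/- Let Δ̃ be a finite reduced crystallographic root system in a real inner product space Ẽ with Weyl group W̃, positive system Δ̃⁺ and half-sum of positive roots ρ̃. Let Δ ⊆ Δ̃ be a symmetric closed subsystem with positive system Δ⁺ = Δ ∩ Δ̃⁺ and half-sum ρ ∈ E := span_ℝ(Δ), let W ≤ W̃ be the subgroup generated by the reflections s_α for α ∈ Δ (which preserves E), and let r : Ẽ → E be the orthogonal projection with respect to the W̃-invariant inner product. Then for every w ∈ W whose inversion set in Δ̃ satisfies Φ̃_w = Δ̃⁺ ∩ w⁻¹(−Δ̃⁺) ⊆ Δ, and for every λ̃ ∈ Ẽ, one has r( w(λ̃+ρ̃) − ρ̃ ) = w( r(λ̃)+ρ ) − ρ; that is, r intertwines the affine action of w on Ẽ (defined with ρ̃) with its affine action on E (defined with ρ). -/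
open scoped InnerProductSpace Classical

section Aux

variable {F : Type*} [NormedAddCommGroup F] [InnerProductSpace ℝ F] [FiniteDimensional ℝ F]

lemma aux_reflect_apply {α : F} (hα : α ≠ 0) (β : F) :
    RootSystemData.reflect α β = β - (2 * ⟪β, α⟫_ℝ / ⟪α, α⟫_ℝ) • α := by
  have hsum := Submodule.starProjection_add_starProjection_orthogonal (K := ℝ ∙ α) β
  have hsing : ((ℝ ∙ α).starProjection β : F) = (⟪α, β⟫_ℝ / ⟪α, α⟫_ℝ) • α := by
    rw [Submodule.starProjection_singleton, real_inner_self_eq_norm_sq]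
    norm_num
  have h2 : ((ℝ ∙ α)ᗮ.starProjection β : F) = β - (⟪α, β⟫_ℝ / ⟪α, α⟫_ℝ) • α := by
    rw [← hsing]
    exact (eq_sub_of_add_eq' hsum)
  show Submodule.reflection (ℝ ∙ α)ᗮ β = _
  rw [Submodule.reflection_apply, h2, real_inner_comm β α, two_smul]
  have h3 : (2 * ⟪β, α⟫_ℝ / ⟪α, α⟫_ℝ) • α
      = (⟪β, α⟫_ℝ / ⟪α, α⟫_ℝ) • α + (⟪β, α⟫_ℝ / ⟪α, α⟫_ℝ) • α := by
    rw [← add_smul]; ring_nf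
  rw [h3]; abel

variable (R : RootSystemData F)

lemma aux_root_ne_zero {α : F} (hα : α ∈ R.roots) : α ≠ 0 := by
  rintro rfl; exact R.zero_not_mem hα

lemma aux_inner_self_pos {α : F} (hα : α ∈ R.roots) : 0 < ⟪α, α⟫_ℝ := by
  rw [real_inner_self_eq_norm_sq]
  exact pow_pos (norm_pos_iff.mpr (aux_root_ne_zero R hα)) 2

lemma aux_neg_mem {α : F} (hα : α ∈ R.roots) : -α ∈ R.roots := by
  have haa := aux_inner_self_pos R hα
  have h := R.reflect_mem α hα α hα
  have h2 : 2 * ⟪α, α⟫_ℝ / ⟪α, α⟫_ℝ = 2 := by field_simp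
  rw [h2] at h
  have h3 : α - (2 : ℝ) • α = -α := by rw [two_smul]; abel
  rwa [h3] at h

/-- If two roots pair positively and are distinct, their difference is a root. -/
lemma aux_sub_mem {α β : F} (hα : α ∈ R.roots) (hβ : β ∈ R.roots)
    (hip : 0 < ⟪β, α⟫_ℝ) (hne : β ≠ α) : β - α ∈ R.roots := by
  have haa := aux_inner_self_pos R hα
  have hbb := aux_inner_self_pos R hβ
  obtain ⟨n, hn⟩ := R.crystallographic α hα β hβ
  obtain ⟨m, hm⟩ := R.crystallographic β hβ α hα
  have e1 : 2 * ⟪β, α⟫_ℝ = (n : ℝ) * ⟪α, α⟫_ℝ := by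
    field_simp at hn; linarith [hn]
  have e2 : 2 * ⟪β, α⟫_ℝ = (m : ℝ) * ⟪β, β⟫_ℝ := by
    have hm' : 2 * ⟪β, α⟫_ℝ / ⟪β, β⟫_ℝ = (m : ℝ) := by rwa [real_inner_comm α β]
    field_simp at hm'; linarith [hm']
  have hn1 : 1 ≤ n := by
    have h0 : (0 : ℝ) < (n : ℝ) * ⟪α, α⟫_ℝ := by rw [← e1]; linarith
    have : (0 : ℝ) < (n : ℝ) := by nlinarith
    have : (0 : ℤ) < n := by exact_mod_cast this
    omega
  have hm1 : 1 ≤ m := by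
    have h0 : (0 : ℝ) < (m : ℝ) * ⟪β, β⟫_ℝ := by rw [← e2]; linarith
    have : (0 : ℝ) < (m : ℝ) := by nlinarith
    have : (0 : ℤ) < m := by exact_mod_cast this
    omega
  have hα0 := aux_root_ne_zero R hα
  have hβ0 := aux_root_ne_zero R hβ
  have hαn : (0 : ℝ) < ‖α‖ := norm_pos_iff.mpr hα0
  have hβn : (0 : ℝ) < ‖β‖ := norm_pos_iff.mpr hβ0
  by_cases hprop : ‖α‖ • β = ‖β‖ • α
  · exfalso
    have hβeq : β = (‖β‖ / ‖α‖) • α := by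
      have := congrArg (fun x : F => (‖α‖)⁻¹ • x) hprop
      simpa [smul_smul, inv_mul_cancel₀ hαn.ne', div_eq_inv_mul] using this
    rcases R.reduced α hα (‖β‖ / ‖α‖) (by rw [← hβeq]; exact hβ) with h1 | h1
    · exact hne (by rw [hβeq, h1, one_smul])
    · have hpos : 0 < ‖β‖ / ‖α‖ := div_pos hβn hαn
      rw [h1] at hpos; linarith
  · have hlt : ⟪β, α⟫_ℝ < ‖β‖ * ‖α‖ := inner_lt_norm_mul_iff_real.2 hprop
    have hbn2 : ⟪β, β⟫_ℝ = ‖β‖ ^ 2 := real_inner_self_eq_norm_sq β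
    have han2 : ⟪α, α⟫_ℝ = ‖α‖ ^ 2 := real_inner_self_eq_norm_sq α
    have hsq : ⟪β, α⟫_ℝ * ⟪β, α⟫_ℝ < ⟪β, β⟫_ℝ * ⟪α, α⟫_ℝ := by nlinarith
    have hnm : n * m < 4 := by
      have h4 : ((n : ℝ)) * ((m : ℝ)) * (⟪α, α⟫_ℝ * ⟪β, β⟫_ℝ)
          = 4 * (⟪β, α⟫_ℝ * ⟪β, α⟫_ℝ) := by nlinarith [e1, e2]
      have : ((n * m : ℤ) : ℝ) < 4 := by
        push_cast
        nlinarith [mul_pos haa hbb, hsq]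
      exact_mod_cast this
    have hone : n = 1 ∨ m = 1 := by
      by_contra hcon
      push_neg at hcon
      have h2n : 2 ≤ n := by omega
      have h2m : 2 ≤ m := by omega
      nlinarith
    rcases hone with h1 | h1
    · have := R.reflect_mem α hα β hβ
      rw [hn, h1] at this
      simpa using this
    · have hout := R.reflect_mem β hβ α hα
      rw [hm, h1] at hout
      have := aux_neg_mem R hout
      have harr : -(α - ((1 : ℤ) : ℝ) • β) = β - α := by push_cast; rw [one_smul]; abel
      rwa [harr] at this

/-- For `α, β` in a closed symmetric subsystem with `⟨β, α^∨⟩ = n ≥ 0`, the element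
`β - n α` (the reflection of `β` when `n` is the full Cartan integer) stays in `D`. -/
lemma aux_string_mem {D : Finset F} (hsub : D ⊆ R.roots) (hsymm : ∀ α ∈ D, -α ∈ D)
    (hclosed : ∀ α ∈ D, ∀ β ∈ D, α + β ∈ R.roots → α + β ∈ D) :
    ∀ n : ℕ, ∀ α ∈ D, ∀ β ∈ D, 2 * ⟪β, α⟫_ℝ / ⟪α, α⟫_ℝ = (n : ℝ) →
      β - (n : ℝ) • α ∈ D := by
  intro n
  induction n using Nat.strong_induction_on with
  | _ n ih =>
  intro α hα β hβ hn
  have hαr := hsub hα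
  have hβr := hsub hβ
  have haa := aux_inner_self_pos R hαr
  rcases Nat.eq_zero_or_pos n with h0 | hpos
  · subst h0; simpa using hβ
  have e1 : 2 * ⟪β, α⟫_ℝ = (n : ℝ) * ⟪α, α⟫_ℝ := by
    field_simp at hn; linarith [hn]
  have hip : 0 < ⟪β, α⟫_ℝ := by
    have hnp : (0 : ℝ) < (n : ℝ) := by exact_mod_cast hpos
    nlinarith
  by_cases hβα : β = α
  · subst hβα
    have h2 : ((n : ℕ) : ℝ) = 2 := by
      rw [← hn]; field_simp
    have hn2 : n = 2 := by exact_mod_cast h2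
    subst hn2
    have harr : β - ((2 : ℕ) : ℝ) • β = -β := by push_cast; rw [two_smul]; abel
    rw [harr]; exact hsymm β hβ
  · have hsubroot : β - α ∈ R.roots := aux_sub_mem R hαr hβr hip hβα
    have hbma : β - α ∈ D := by
      have := hclosed β hβ (-α) (hsymm α hα) (by rwa [← sub_eq_add_neg])
      rwa [← sub_eq_add_neg] at this
    rcases Nat.lt_or_ge n 2 with hlt2 | hge2
    · have hn1 : n = 1 := by omega
      subst hn1
      simpa using hbma
    · have hpair : 2 * ⟪β - α, α⟫_ℝ / ⟪α, α⟫_ℝ = ((n - 2 : ℕ) : ℝ) := by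
        rw [inner_sub_left, div_eq_iff haa.ne', Nat.cast_sub hge2]
        push_cast
        linear_combination e1
      have hind := ih (n - 2) (by omega) α hα (β - α) hbma hpair
      have hroot : β - (n : ℝ) • α ∈ R.roots := by
        have := R.reflect_mem α hαr β hβr
        rwa [hn] at this
      have harr : β - (n : ℝ) • α = (β - α - ((n - 2 : ℕ) : ℝ) • α) + (-α) := by
        rw [Nat.cast_sub hge2]
        push_cast
        module
      rw [harr]
      exact hclosed _ hind _ (hsymm α hα) (by rw [← harr]; exact hroot)

/-- A closed symmetric subsystem is stable under its own reflections. -/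
lemma aux_reflect_mem_D {D : Finset F} (hsub : D ⊆ R.roots) (hsymm : ∀ α ∈ D, -α ∈ D)
    (hclosed : ∀ α ∈ D, ∀ β ∈ D, α + β ∈ R.roots → α + β ∈ D)
    {α β : F} (hα : α ∈ D) (hβ : β ∈ D) :
    RootSystemData.reflect α β ∈ D := by
  have hα0 := aux_root_ne_zero R (hsub hα)
  have haa := aux_inner_self_pos R (hsub hα)
  rw [aux_reflect_apply hα0]
  obtain ⟨n, hn⟩ := R.crystallographic α (hsub hα) β (hsub hβ)
  rcases le_or_gt 0 n with h | h
  · have hcast : ((n.toNat : ℕ) : ℝ) = (n : ℝ) := by exact_mod_cast Int.toNat_of_nonneg h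
    have := aux_string_mem R hsub hsymm hclosed n.toNat α hα β hβ (by rw [hn, hcast])
    rwa [hcast, ← hn] at this
  · have hcast : (((-n).toNat : ℕ) : ℝ) = -(n : ℝ) := by
      have : ((-n).toNat : ℤ) = -n := Int.toNat_of_nonneg (by omega)
      exact_mod_cast this
    have hpair : 2 * ⟪β, -α⟫_ℝ / ⟪-α, -α⟫_ℝ = (((-n).toNat : ℕ) : ℝ) := by
      rw [inner_neg_right, inner_neg_neg, hcast, ← hn]
      ring
    have hmem := aux_string_mem R hsub hsymm hclosed (-n).toNat (-α) (hsymm α hα) β hβ hpair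
    rw [hcast] at hmem
    have harr : β - (-(n : ℝ)) • (-α) = β - (2 * ⟪β, α⟫_ℝ / ⟪α, α⟫_ℝ) • α := by
      rw [hn, neg_smul_neg]
    rwa [harr] at hmem

/-- Elements of the reflection subgroup attached to `D` preserve the roots, preserve `D`,
and fix the orthogonal complement of the span of `D` pointwise. -/
lemma aux_weyl_preserves (D : Finset F) (hsub : D ⊆ R.roots) (hsymm : ∀ α ∈ D, -α ∈ D)
    (hclosed : ∀ α ∈ D, ∀ β ∈ D, α + β ∈ R.roots → α + β ∈ D)
    {w : F ≃ₗᵢ[ℝ] F}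
    (hw : w ∈ Subgroup.closure { s : F ≃ₗᵢ[ℝ] F | ∃ α ∈ D, s = RootSystemData.reflect α }) :
    (∀ β ∈ R.roots, w β ∈ R.roots) ∧ (∀ β ∈ D, w β ∈ D) ∧
    (∀ β ∈ R.roots, w.symm β ∈ R.roots) ∧ (∀ β ∈ D, w.symm β ∈ D) ∧
    (∀ x ∈ (Submodule.span ℝ (D : Set F))ᗮ, w x = x) := by
  induction hw using Subgroup.closure_induction with
  | mem s hs =>
    obtain ⟨α, hα, rfl⟩ := hs
    have hα0 := aux_root_ne_zero R (hsub hα)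
    have hsym : (RootSystemData.reflect α).symm = RootSystemData.reflect α := Submodule.reflection_symm
    have hroots : ∀ β ∈ R.roots, RootSystemData.reflect α β ∈ R.roots := by
      intro β hβ
      rw [aux_reflect_apply hα0]
      exact R.reflect_mem α (hsub hα) β hβ
    have hDst : ∀ β ∈ D, RootSystemData.reflect α β ∈ D := fun β hβ =>
      aux_reflect_mem_D R hsub hsymm hclosed hα hβ
    have hfix : ∀ x ∈ (Submodule.span ℝ (D : Set F))ᗮ, RootSystemData.reflect α x = x := by
      intro x hx
      have hle : (ℝ ∙ α) ≤ Submodule.span ℝ (D : Set F) :=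
        (Submodule.span_singleton_le_iff_mem α _).2 (Submodule.subset_span hα)
      have hx' : x ∈ (ℝ ∙ α)ᗮ := Submodule.orthogonal_le hle hx
      exact Submodule.reflection_mem_subspace_eq_self hx'
    exact ⟨hroots, hDst, by rw [hsym]; exact hroots, by rw [hsym]; exact hDst,
      hfix⟩
  | one => exact ⟨fun β hβ => hβ, fun β hβ => hβ, fun β hβ => by exact hβ,
      fun β hβ => by exact hβ, fun v _ => rfl⟩
  | mul x y hx hy ihx ihy =>
    obtain ⟨hx1, hx2, hx3, hx4, hx5⟩ := ihx
    obtain ⟨hy1, hy2, hy3, hy4, hy5⟩ := ihy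
    refine ⟨fun β hβ => hx1 _ (hy1 β hβ), fun β hβ => hx2 _ (hy2 β hβ),
      fun β hβ => hy3 _ (hx3 β hβ), fun β hβ => hy4 _ (hx4 β hβ), fun v hv => ?_⟩
    show x (y v) = v
    rw [hy5 v hv, hx5 v hv]
  | inv x hx ihx =>
    obtain ⟨hx1, hx2, hx3, hx4, hx5⟩ := ihx
    refine ⟨hx3, hx4, hx1, hx2, fun v hv => ?_⟩
    show x.symm v = v
    conv_lhs => rw [← hx5 v hv]
    exact x.symm_apply_apply v

/-- The key combinatorial identity: how an isometry permuting a "positive system" moves its sum. -/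
lemma aux_sumA (w : F ≃ₗᵢ[ℝ] F) (P : Finset F)
    (hd : ∀ α ∈ P, -α ∉ P)
    (h1 : ∀ α ∈ P, w α ∈ P ∨ -(w α) ∈ P)
    (h2 : ∀ β ∈ P, w.symm β ∈ P ∨ -(w.symm β) ∈ P) :
    ∑ α ∈ P, w α = (∑ α ∈ P, α) + 2 • ∑ α ∈ P.filter (fun α => -(w α) ∈ P), w α := by
  classical
  have key : ∑ α ∈ P, (if -(w α) ∈ P then -(w α) else w α) = ∑ β ∈ P, β := by
    refine Finset.sum_nbij' (fun α => if -(w α) ∈ P then -(w α) else w α)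
      (fun β => if -(w.symm β) ∈ P then -(w.symm β) else w.symm β) ?_ ?_ ?_ ?_ ?_
    · intro a ha
      split_ifs with h
      · exact h
      · exact (h1 a ha).resolve_right h
    · intro b hb
      split_ifs with h
      · exact h
      · exact (h2 b hb).resolve_right h
    · intro a ha
      by_cases h : -(w a) ∈ P
      · rw [if_pos h]
        have e : w.symm (-(w a)) = -a := by simp
        simp [e, ha]
      · rw [if_neg h]
        have e : w.symm (w a) = a := w.symm_apply_apply a
        simp [e, hd a ha]
    · intro b hb
      by_cases h : -(w.symm b) ∈ P
      · rw [if_pos h]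
        have e : w (-(w.symm b)) = -b := by simp
        simp [e, hb]
      · rw [if_neg h]
        have e : w (w.symm b) = b := w.apply_symm_apply b
        simp [e, hd b hb]
    · intro a _; rfl
  have split1 : ∑ α ∈ P, (if -(w α) ∈ P then -(w α) else w α)
      = (∑ α ∈ P, w α) - 2 • ∑ α ∈ P.filter (fun α => -(w α) ∈ P), w α := by
    have hterm : ∀ α, (if -(w α) ∈ P then -(w α) else w α)
        = w α - 2 • (if -(w α) ∈ P then w α else 0) := by
      intro α
      split_ifs with h
      · rw [two_smul]; abel
      · simp
    rw [Finset.sum_congr rfl fun α _ => hterm α, Finset.sum_sub_distrib,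
      ← Finset.smul_sum, ← Finset.sum_filter]
  rw [split1] at key
  rw [sub_eq_iff_eq_add] at key
  rw [key]

/-- The orthogonal projection commutes with an isometry fixing the orthogonal complement. -/
lemma aux_proj_comm (K : Submodule ℝ F) (w : F ≃ₗᵢ[ℝ] F)
    (hfix : ∀ x ∈ Kᗮ, w x = x) (v : F) :
    (Submodule.orthogonalProjection K (w v) : F) = w (Submodule.orthogonalProjection K v : F) := by
  have hK : ∀ x ∈ K, w x ∈ K := by
    intro x hx
    have hxo : w x ∈ Kᗮᗮ := by
      intro u hu
      have h1 : ⟪w u, w x⟫_ℝ = ⟪u, x⟫_ℝ := w.inner_map_map u x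
      rw [hfix u hu] at h1
      rw [h1, real_inner_comm x u]
      exact hu x hx
    rwa [K.orthogonal_orthogonal] at hxo
  have hmem : (v - Submodule.orthogonalProjection K v : F) ∈ Kᗮ :=
    Submodule.sub_starProjection_mem_orthogonal v
  have h1 : w v = w (Submodule.orthogonalProjection K v : F) + (v - Submodule.orthogonalProjection K v) := by
    conv_lhs => rw [show v = (Submodule.orthogonalProjection K v : F) + (v - Submodule.orthogonalProjection K v) by
      abel]
    rw [map_add, hfix _ hmem]
  rw [h1, map_add]
  push_cast
  rw [Submodule.orthogonalProjectionOnto_apply_of_mem_orthogonal hmem]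
  rw [Submodule.coe_orthogonalProjectionOnto_apply, Submodule.starProjection_eq_self_iff.2 (hK _ (SetLike.coe_mem _))]
  simp

end Aux

/-- Theorem 3.3(b), computational content: for a symmetric closed subsystem `Δ ⊆ Δ̃`, the
orthogonal projection `r : Ẽ → E = span_ℝ(Δ)` intertwines, for every `w` in the reflection
subgroup `W` generated by `Δ` whose inversion set in `Δ̃` is contained in `Δ`, the affine action
of `w` on `Ẽ` (defined with `ρ̃`) with its affine action on `E` (defined with `ρ`, the half-sum
of `Δ⁺ = Δ ∩ Δ̃⁺`). -/
theorem projection_intertwines_affine_actions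
    {F : Type*} [NormedAddCommGroup F] [InnerProductSpace ℝ F] [FiniteDimensional ℝ F]
    (R : RootSystemData F) (D : Finset F)
    (hsub : D ⊆ R.roots)
    (hsymm : ∀ α ∈ D, -α ∈ D)
    (hclosed : ∀ α ∈ D, ∀ β ∈ D, α + β ∈ R.roots → α + β ∈ D)
    (w : F ≃ₗᵢ[ℝ] F)
    (hw : w ∈ Subgroup.closure { s : F ≃ₗᵢ[ℝ] F | ∃ α ∈ D, s = RootSystemData.reflect α })
    (hΦ : R.inv w ⊆ D) :
    ∀ lam : F,
      (Submodule.orthogonalProjection (Submodule.span ℝ (D : Set F)) (w (lam + R.rho) - R.rho) : F)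
        = w ((Submodule.orthogonalProjection (Submodule.span ℝ (D : Set F)) lam : F)
              + (2 : ℝ)⁻¹ • ∑ α ∈ D ∩ R.pos, α)
          - (2 : ℝ)⁻¹ • ∑ α ∈ D ∩ R.pos, α := by
  intro lam
  classical
  set K := Submodule.span ℝ (D : Set F) with hKdef
  obtain ⟨hroots, hD, hroots', hD', hfix⟩ := aux_weyl_preserves R D hsub hsymm hclosed hw
  have hnegpos : ∀ α ∈ R.pos, -α ∉ R.pos := by
    intro α hα hneg
    rw [RootSystemData.pos, Finset.mem_filter] at hα hneg
    have h2 := hneg.2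
    rw [map_neg] at h2
    linarith [hα.2]
  have hsign : ∀ γ ∈ R.roots, γ ∈ R.pos ∨ -γ ∈ R.pos := by
    intro γ hγ
    rcases lt_or_gt_of_ne (R.posFun_ne_zero γ hγ) with h | h
    · right
      refine Finset.mem_filter.2 ⟨aux_neg_mem R hγ, ?_⟩
      rw [map_neg]; linarith
    · left; exact Finset.mem_filter.2 ⟨hγ, h⟩
  have hpos1 : ∀ α ∈ R.pos, w α ∈ R.pos ∨ -(w α) ∈ R.pos := fun α hα =>
    hsign _ (hroots α (Finset.mem_filter.1 hα).1)
  have hpos2 : ∀ α ∈ R.pos, w.symm α ∈ R.pos ∨ -(w.symm α) ∈ R.pos := fun α hα =>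
    hsign _ (hroots' α (Finset.mem_filter.1 hα).1)
  have sum1 := aux_sumA w R.pos hnegpos hpos1 hpos2
  have hd2 : ∀ α ∈ D ∩ R.pos, -α ∉ D ∩ R.pos := by
    intro α hα h
    exact hnegpos α (Finset.mem_inter.1 hα).2 (Finset.mem_inter.1 h).2
  have hsign2 : ∀ γ ∈ D, γ ∈ D ∩ R.pos ∨ -γ ∈ D ∩ R.pos := by
    intro γ hγ
    rcases hsign γ (hsub hγ) with h | h
    · exact Or.inl (Finset.mem_inter.2 ⟨hγ, h⟩)
    · exact Or.inr (Finset.mem_inter.2 ⟨hsymm γ hγ, h⟩)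
  have hp21 : ∀ α ∈ D ∩ R.pos, w α ∈ D ∩ R.pos ∨ -(w α) ∈ D ∩ R.pos := fun α hα =>
    hsign2 _ (hD α (Finset.mem_inter.1 hα).1)
  have hp22 : ∀ α ∈ D ∩ R.pos, w.symm α ∈ D ∩ R.pos ∨ -(w.symm α) ∈ D ∩ R.pos := fun α hα =>
    hsign2 _ (hD' α (Finset.mem_inter.1 hα).1)
  have sum2 := aux_sumA w (D ∩ R.pos) hd2 hp21 hp22
  have hfilt : (D ∩ R.pos).filter (fun α => -(w α) ∈ D ∩ R.pos)
      = R.pos.filter (fun α => -(w α) ∈ R.pos) := by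
    ext α
    simp only [Finset.mem_filter, Finset.mem_inter]
    constructor
    · rintro ⟨⟨hαD, hαp⟩, _, hwp⟩
      exact ⟨hαp, hwp⟩
    · rintro ⟨hαp, hwp⟩
      have hαD : α ∈ D := hΦ (by
        unfold RootSystemData.inv
        exact Finset.mem_filter.2 ⟨hαp, hwp⟩)
      exact ⟨⟨hαD, hαp⟩, hsymm _ (hD α hαD), hwp⟩
  set S := ∑ α ∈ R.pos.filter (fun α => -(w α) ∈ R.pos), w α with hSdef
  have hrho1 : w R.rho - R.rho = S := by
    rw [RootSystemData.rho, map_smul, map_sum, sum1]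
    module
  have hrho2 : w ((2 : ℝ)⁻¹ • ∑ α ∈ D ∩ R.pos, α) - (2 : ℝ)⁻¹ • ∑ α ∈ D ∩ R.pos, α = S := by
    rw [map_smul, map_sum, sum2, hfilt]
    module
  have hSK : S ∈ K := by
    apply Submodule.sum_mem
    intro α hα
    have hαD : α ∈ D := hΦ (by unfold RootSystemData.inv; exact hα)
    exact Submodule.subset_span (Finset.mem_coe.2 (hD α hαD))
  have hdecomp : w (lam + R.rho) - R.rho = w lam + S := by
    rw [map_add, add_sub_assoc, hrho1]
  calc (Submodule.orthogonalProjection K (w (lam + R.rho) - R.rho) : F)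
      = (Submodule.orthogonalProjection K (w lam + S) : F) := by rw [hdecomp]
    _ = (Submodule.orthogonalProjection K (w lam) : F) + S := by
        rw [map_add, Submodule.coe_add, Submodule.coe_orthogonalProjectionOnto_apply K S,
          Submodule.starProjection_eq_self_iff.2 hSK]
    _ = w (Submodule.orthogonalProjection K lam : F) + S := by rw [aux_proj_comm K w hfix lam]
    _ = w ((Submodule.orthogonalProjection K lam : F) + (2 : ℝ)⁻¹ • ∑ α ∈ D ∩ R.pos, α)
          - (2 : ℝ)⁻¹ • ∑ α ∈ D ∩ R.pos, α := by
        rw [map_add, add_sub_assoc, hrho2]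
end
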